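/- Let m be a natural number, s_0,…,s_m, w_0,…,w_m, f_0,…,f_m ∈ ℂ, and let μ, ν be natural numbers with μ ≤ m and ν ≤ m. Suppose ∑_{k=0}^m w_k f_k s_k^l = 0 for all l < μ and ∑_{k=0}^m w_k s_k^l = 0 for all l < ν. Then for every s ∈ ℂ with |s| > max_{0≤k≤m} |s_k| such that ∑_{k=0}^m w_k/(s − s_k) ≠ 0, one has the asymptotic-form identity (∑_{k=0}^m w_k f_k/(s − s_k)) / (∑_{k=0}^m w_k/(s − s_k)) = s^{(ν:ℤ)−μ} · (∑_{l=0}^∞ (∑_{k=0}^m w_k f_k s_k^{μ+l})·s^{−l}) / (∑_{l=0}^∞ (∑_{k=0}^m w_k s_k^{ν+l})·s^{−l}), where both series over l converge absolutely for such s. -/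

import Mathlib

open Finset

lemma bary_aux (m : ℕ) (s a : ℕ → ℂ) (μ : ℕ) (z : ℂ)
    (hz : ∀ k ∈ Finset.range (m + 1), ‖s k‖ < ‖z‖)
    (h0 : ∀ l < μ, ∑ k ∈ Finset.range (m + 1), a k * s k ^ l = 0) :
    Summable (fun l : ℕ => ‖(∑ k ∈ Finset.range (m + 1), a k * s k ^ (μ + l)) / z ^ l‖) ∧
    ∑ k ∈ Finset.range (m + 1), a k / (z - s k) =
      (∑' l : ℕ, (∑ k ∈ Finset.range (m + 1), a k * s k ^ (μ + l)) / z ^ l) / z ^ (μ + 1) := by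
  have hzpos : (0:ℝ) < ‖z‖ := lt_of_le_of_lt (norm_nonneg (s 0)) (hz 0 (by simp))
  have hz0 : z ≠ 0 := norm_pos_iff.mp hzpos
  -- per-k norm summability for any shift c
  have keyk : ∀ (c : ℕ), ∀ k ∈ Finset.range (m+1),
      Summable (fun l : ℕ => ‖a k * s k ^ (c + l) / z ^ l‖) := by
    intro c k hk
    have hr : ‖s k‖ / ‖z‖ < 1 := (div_lt_one hzpos).2 (hz k hk)
    have hr0 : (0:ℝ) ≤ ‖s k‖ / ‖z‖ := div_nonneg (norm_nonneg _) hzpos.le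
    have : (fun l : ℕ => ‖a k * s k ^ (c + l) / z ^ l‖)
        = fun l => (‖a k‖ * ‖s k‖ ^ c) * (‖s k‖ / ‖z‖) ^ l := by
      funext l
      simp [norm_div, norm_mul, norm_pow, pow_add, div_pow, mul_div_assoc, mul_assoc]
    rw [this]
    exact (summable_geometric_of_lt_one hr0 hr).mul_left _
  have sumnorm : ∀ (c : ℕ),
      Summable (fun l : ℕ => ‖(∑ k ∈ Finset.range (m+1), a k * s k ^ (c + l)) / z ^ l‖) := by
    intro c
    have hS : Summable (fun l : ℕ => ∑ k ∈ Finset.range (m+1), ‖a k * s k ^ (c + l) / z ^ l‖) :=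
      summable_sum (fun k hk => keyk c k hk)
    refine Summable.of_nonneg_of_le (fun l => norm_nonneg _) (fun l => ?_) hS
    rw [Finset.sum_div]
    exact norm_sum_le _ _
  refine ⟨sumnorm μ, ?_⟩
  -- per-k series identity
  have hterm : ∀ k ∈ Finset.range (m+1),
      a k / (z - s k) = ∑' l : ℕ, a k * s k ^ l / z ^ (l + 1) := by
    intro k hk
    have hr : ‖s k / z‖ < 1 := by
      rw [norm_div, div_lt_one hzpos]; exact hz k hk
    have hgeo : ∑' l : ℕ, (s k / z) ^ l = (1 - s k / z)⁻¹ := tsum_geometric_of_norm_lt_one hr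
    have hne : z - s k ≠ 0 := by
      intro h
      have : s k = z := by linear_combination -h
      exact absurd (hz k hk) (by rw [this]; exact lt_irrefl _)
    have : (fun l : ℕ => a k * s k ^ l / z ^ (l + 1)) = fun l => (a k / z) * (s k / z) ^ l := by
      funext l
      rw [div_pow, pow_succ]
      ring
    rw [this, tsum_mul_left, hgeo]
    have h1 : (1 : ℂ) - s k / z = (z - s k) / z := by field_simp
    rw [h1]
    field_simp
  -- swap sum and tsum
  have hsum : ∀ k ∈ Finset.range (m+1), Summable (fun l : ℕ => a k * s k ^ l / z ^ (l + 1)) := by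
    intro k hk
    have := keyk 0 k hk
    simp only [zero_add] at this
    have h2 : Summable (fun l : ℕ => a k * s k ^ l / z ^ l) := this.of_norm
    have := h2.div_const z
    refine this.congr fun l => ?_
    rw [pow_succ]
    ring
  have hswap : ∑ k ∈ Finset.range (m+1), a k / (z - s k)
      = ∑' l : ℕ, ∑ k ∈ Finset.range (m+1), a k * s k ^ l / z ^ (l + 1) := by
    rw [Finset.sum_congr rfl hterm]
    exact (Summable.tsum_finsetSum hsum).symm
  have hS : (fun l : ℕ => ∑ k ∈ Finset.range (m+1), a k * s k ^ l / z ^ (l + 1))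
      = fun l => (∑ k ∈ Finset.range (m+1), a k * s k ^ l) / z ^ (l + 1) := by
    funext l; rw [Finset.sum_div]
  rw [hswap, hS]
  -- split off the first μ terms
  have hsum2 : Summable (fun l : ℕ => (∑ k ∈ Finset.range (m+1), a k * s k ^ l) / z ^ (l + 1)) := by
    have := (sumnorm 0).of_norm
    simp only [zero_add] at this
    have := this.div_const z
    refine this.congr fun l => ?_
    rw [pow_succ]; ring
  have hsplit := (Summable.sum_add_tsum_nat_add (f := fun l : ℕ =>
      (∑ k ∈ Finset.range (m+1), a k * s k ^ l) / z ^ (l + 1)) μ hsum2).symm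
  rw [hsplit]
  have hzero : ∑ l ∈ Finset.range μ, (∑ k ∈ Finset.range (m+1), a k * s k ^ l) / z ^ (l + 1) = 0 := by
    refine Finset.sum_eq_zero fun l hl => ?_
    rw [h0 l (Finset.mem_range.mp hl), zero_div]
  rw [hzero, zero_add]
  rw [← tsum_div_const]
  refine tsum_congr fun l => ?_
  rw [add_comm l μ, div_div, ← pow_add, show l + (μ + 1) = μ + l + 1 from by ring]

/-- Paper's Lemma 4.1: the asymptotic form of the interpolatory barycentric rational
function, valid for `|s|` larger than all support points; both series converge
absolutely there. -/
theorem barycentric_asymptotic_form (m : ℕ) (s w f : ℕ → ℂ) (μ ν : ℕ)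
    (hμ : μ ≤ m) (hν : ν ≤ m)
    (hnum0 : ∀ l < μ, ∑ k ∈ Finset.range (m + 1), w k * f k * s k ^ l = 0)
    (hden0 : ∀ l < ν, ∑ k ∈ Finset.range (m + 1), w k * s k ^ l = 0)
    (z : ℂ) (hz : ∀ k ∈ Finset.range (m + 1), ‖s k‖ < ‖z‖)
    (hden : ∑ k ∈ Finset.range (m + 1), w k / (z - s k) ≠ 0) :
    Summable (fun l : ℕ =>
        ‖(∑ k ∈ Finset.range (m + 1), w k * f k * s k ^ (μ + l)) / z ^ l‖) ∧
    Summable (fun l : ℕ =>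
        ‖(∑ k ∈ Finset.range (m + 1), w k * s k ^ (ν + l)) / z ^ l‖) ∧
    (∑ k ∈ Finset.range (m + 1), w k * f k / (z - s k)) /
        (∑ k ∈ Finset.range (m + 1), w k / (z - s k)) =
      z ^ ((ν : ℤ) - μ) *
        ((∑' l : ℕ, (∑ k ∈ Finset.range (m + 1), w k * f k * s k ^ (μ + l)) / z ^ l) /
         (∑' l : ℕ, (∑ k ∈ Finset.range (m + 1), w k * s k ^ (ν + l)) / z ^ l)) := by
  have hz' : ∀ k ∈ Finset.range (m + 1), ‖s k‖ < ‖z‖ := by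
    simpa using hz
  obtain ⟨SA, EA⟩ := bary_aux m s (fun k => w k * f k) μ z hz' hnum0
  obtain ⟨SB, EB⟩ := bary_aux m s w ν z hz' hden0
  have hz0 : z ≠ 0 :=
    norm_pos_iff.mp (lt_of_le_of_lt (norm_nonneg (s 0)) (hz' 0 (by simp)))
  refine ⟨SA, SB, ?_⟩
  set TA := ∑' l : ℕ, (∑ k ∈ Finset.range (m + 1), w k * f k * s k ^ (μ + l)) / z ^ l with hTA
  set TB := ∑' l : ℕ, (∑ k ∈ Finset.range (m + 1), w k * s k ^ (ν + l)) / z ^ l with hTB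
  have hTBne : TB ≠ 0 := by
    intro h
    apply hden
    rw [EB, h, zero_div]
  rw [EA, EB]
  have hzpow : z ^ ((ν : ℤ) - μ) = z ^ ν / z ^ μ := by
    rw [zpow_sub₀ hz0, zpow_natCast, zpow_natCast]
  rw [hzpow]
  field_simp
  ring
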